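/- Let d > 6 be an integer. Then the triangle-condition sum is finite: ∑_{x, y ∈ ℤ^d} |x|^{2−d} |x − y|^{2−d} |y|^{2−d} < ∞, where terms with x = 0, x = y, or y = 0 are omitted from the sum. -/

import Mathlib

open scoped ENNReal

/-- The power `|x|^a` (ℓ^∞ norm of a lattice point, real exponent), valued in `[0,∞]`,
with the convention that the term is omitted (set to `0`) when the base vanishes. -/
noncomputable def latPow {d : ℕ} (x : Fin d → ℤ) (a : ℝ) : ℝ≥0∞ :=
  if x = 0 then 0 else ENNReal.ofReal (‖x‖ ^ a)

namespace Stmt9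

variable {d : ℕ}

/-- nat-valued sup norm -/
def M (x : Fin d → ℤ) : ℕ := Finset.univ.sup fun i => (x i).natAbs

lemma M_ne_zero {x : Fin d → ℤ} (hx : x ≠ 0) : M x ≠ 0 := by
  obtain ⟨i, hi⟩ := Function.ne_iff.mp hx
  have h1 : (x i).natAbs ≤ M x :=
    Finset.le_sup (f := fun i => (x i).natAbs) (Finset.mem_univ i)
  have h2 : 0 < (x i).natAbs := Int.natAbs_pos.mpr hi
  omega

lemma norm_coord (x : Fin d → ℤ) (i : Fin d) : ‖x i‖ = ((x i).natAbs : ℝ) := by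
  rw [Int.norm_eq_abs, Nat.cast_natAbs, Int.cast_abs]

lemma norm_eq (hd : 0 < d) (x : Fin d → ℤ) : ‖x‖ = (M x : ℝ) := by
  have : Nonempty (Fin d) := ⟨⟨0, hd⟩⟩
  apply le_antisymm
  · rw [pi_norm_le_iff_of_nonneg (by positivity)]
    intro i
    rw [norm_coord]
    exact_mod_cast Finset.le_sup (f := fun i => (x i).natAbs) (Finset.mem_univ i)
  · obtain ⟨i, _, hi⟩ := Finset.exists_mem_eq_sup Finset.univ Finset.univ_nonempty
      (fun i => (x i).natAbs)
    calc (M x : ℝ) = ‖x i‖ := by rw [norm_coord]; unfold M; exact_mod_cast hi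
      _ ≤ ‖x‖ := norm_le_pi_norm x i

lemma rpow_exp_id (k : ℕ) (r : ℝ) :
    (2:ℝ)^((k+3)*d) * ((2:ℝ)^k) ^ (-r) = (2:ℝ)^(3*d) * ((2:ℝ) ^ ((d:ℝ) - r))^k := by
  rw [← Real.rpow_natCast 2 ((k+3)*d), ← Real.rpow_natCast 2 k,
    ← Real.rpow_natCast ((2:ℝ) ^ ((d:ℝ) - r)) k, ← Real.rpow_natCast 2 (3*d),
    ← Real.rpow_mul (by norm_num), ← Real.rpow_mul (by norm_num),
    ← Real.rpow_add (by norm_num), ← Real.rpow_add (by norm_num)]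
  congr 1
  push_cast
  ring

/-- Key summability: `∑_x |x|^{-r} < ∞` for `r > d`. -/
lemma sum_lt_top (hd : 0 < d) {r : ℝ} (hr : (d:ℝ) < r) :
    ∑' x : Fin d → ℤ, latPow x (-r) < ⊤ := by
  set ρ : ℝ≥0∞ := ENNReal.ofReal ((2:ℝ) ^ ((d:ℝ) - r)) with hρdef
  have hρ1 : ρ < 1 := by
    rw [hρdef, ← ENNReal.ofReal_one]
    exact ENNReal.ofReal_lt_ofReal_iff (by norm_num) |>.mpr
      (Real.rpow_lt_one_of_one_lt_of_neg (by norm_num) (by linarith))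
  -- box of radius 2^(k+1)
  set B : ℕ → Finset (Fin d → ℤ) :=
    fun k => Finset.Icc (fun _ => -(2^(k+1) : ℤ)) (fun _ => (2^(k+1) : ℤ)) with hBdef
  set g : ℕ → (Fin d → ℤ) → ℝ≥0∞ := fun k x =>
    if x ∈ B k then ENNReal.ofReal (((2:ℝ)^k) ^ (-r)) else 0 with hgdef
  have hpt : ∀ x : Fin d → ℤ, latPow x (-r) ≤ ∑' k, g k x := by
    intro x
    by_cases hx : x = 0
    · simp [latPow, hx]
    · set k := Nat.log 2 (M x) with hk
      have hM := M_ne_zero hx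
      have hlow : (2:ℕ)^k ≤ M x := Nat.pow_log_le_self 2 hM
      have hhigh : M x < 2^(k+1) := Nat.lt_pow_succ_log_self (by norm_num) _
      have hmem : x ∈ B k := by
        rw [hBdef, Finset.mem_Icc, Pi.le_def, Pi.le_def]
        have key : ∀ i, (x i).natAbs < 2^(k+1) := fun i =>
          lt_of_le_of_lt (Finset.le_sup (f := fun i => (x i).natAbs) (Finset.mem_univ i)) hhigh
        have hc : ((2^(k+1) : ℕ) : ℤ) = 2^(k+1) := by push_cast; ring
        constructor <;> intro i <;> (have := key i; omega)
      have hval : latPow x (-r) ≤ ENNReal.ofReal (((2:ℝ)^k) ^ (-r)) := by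
        rw [latPow, if_neg hx]
        apply ENNReal.ofReal_le_ofReal
        have hr0 : (0:ℝ) ≤ r := le_trans (Nat.cast_nonneg d) hr.le
        apply Real.rpow_le_rpow_of_nonpos (by positivity) _ (by linarith)
        rw [norm_eq hd]
        exact_mod_cast hlow
      calc latPow x (-r) ≤ g k x := by rw [hgdef]; simpa [hmem] using hval
        _ ≤ ∑' k, g k x := ENNReal.le_tsum k
  have hcard : ∀ k, (B k).card ≤ 2 ^ ((k+3)*d) := by
    intro k
    rw [hBdef, Pi.card_Icc]
    have h1 : ∀ i : Fin d, (Finset.Icc (-(2^(k+1)) : ℤ) (2^(k+1))).card = 2^(k+2) + 1 := by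
      intro i
      rw [Int.card_Icc,
        show ((2:ℤ)^(k+1) + 1 - -(2^(k+1))) = ((2^(k+2)+1 : ℕ) : ℤ) by push_cast; ring,
        Int.toNat_natCast]
    calc (∏ i : Fin d, (Finset.Icc (-(2^(k+1)) : ℤ) (2^(k+1))).card)
        = (2^(k+2)+1)^d := by rw [Finset.prod_congr rfl (fun i _ => h1 i)]; simp
      _ ≤ (2^(k+3))^d := by
          apply Nat.pow_le_pow_left
          have h1 : (1:ℕ) ≤ 2^(k+2) := Nat.one_le_two_pow
          have h2 : (2:ℕ)^(k+3) = 2^(k+2)*2 := by rw [pow_succ]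
          omega
      _ = 2^((k+3)*d) := by rw [← pow_mul]
  have hinner : ∀ k, ∑' x : Fin d → ℤ, g k x ≤ 2^(3*d) * ρ^k := by
    intro k
    have h0 : ∑' x : Fin d → ℤ, g k x = ∑ x ∈ B k, ENNReal.ofReal (((2:ℝ)^k) ^ (-r)) := by
      rw [tsum_eq_sum (s := B k) (fun b hb => by rw [hgdef]; exact if_neg hb)]
      exact Finset.sum_congr rfl (fun b hb => by rw [hgdef]; exact if_pos hb)
    rw [h0, Finset.sum_const, nsmul_eq_mul]
    calc ((B k).card : ℝ≥0∞) * ENNReal.ofReal (((2:ℝ)^k) ^ (-r))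
        ≤ (2^((k+3)*d) : ℕ) * ENNReal.ofReal (((2:ℝ)^k) ^ (-r)) := by
          gcongr
          exact_mod_cast hcard k
      _ = ENNReal.ofReal ((2:ℝ)^((k+3)*d) * ((2:ℝ)^k) ^ (-r)) := by
          rw [ENNReal.ofReal_mul (by positivity)]
          congr 1
          rw [ENNReal.ofReal_pow (by norm_num : (0:ℝ) ≤ 2)]
          norm_num
      _ = ENNReal.ofReal ((2:ℝ)^(3*d) * ((2:ℝ) ^ ((d:ℝ) - r))^k) := by rw [rpow_exp_id]
      _ = 2^(3*d) * ρ^k := by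
          rw [ENNReal.ofReal_mul (by positivity),
            ENNReal.ofReal_pow (p := (2:ℝ) ^ ((d:ℝ) - r)) (by positivity) k,
            ENNReal.ofReal_pow (p := (2:ℝ)) (by norm_num) (3*d)]
          norm_num
          rw [hρdef]
  calc ∑' x : Fin d → ℤ, latPow x (-r) ≤ ∑' x, ∑' k, g k x := ENNReal.tsum_le_tsum hpt
    _ = ∑' k, ∑' x, g k x := ENNReal.tsum_comm
    _ ≤ ∑' k, 2^(3*d) * ρ^k := ENNReal.tsum_le_tsum hinner
    _ = 2^(3*d) * (1 - ρ)⁻¹ := by rw [ENNReal.tsum_mul_left, ENNReal.tsum_geometric]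
    _ < ⊤ := by
        apply ENNReal.mul_lt_top
        · exact (ENNReal.pow_lt_top (by norm_num))
        · rw [lt_top_iff_ne_top, ENNReal.inv_ne_top]
          intro h
          rw [tsub_eq_zero_iff_le] at h
          exact absurd h (not_le.mpr hρ1)

/-- Real pointwise inequality: for `0 < U ≤ V ≤ W`,
`(UVW)^{-a} ≤ U^{-(a+t)} V^{-(2a-t)}` when `0 ≤ t ≤ a`. -/
lemma key_real {U V W a t : ℝ} (hU : 0 < U) (hUV : U ≤ V) (hVW : V ≤ W)
    (ht : 0 ≤ t) (hta : t ≤ a) :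
    U ^ (-a) * V ^ (-a) * W ^ (-a) ≤ U ^ (-(a+t)) * V ^ (-(2*a - t)) := by
  have hV : 0 < V := hU.trans_le hUV
  have hW : 0 < W := hV.trans_le hVW
  have h1 : W ^ (-a) ≤ V ^ (-a) :=
    Real.rpow_le_rpow_of_nonpos hV hVW (by linarith)
  have h2 : V ^ (-t) ≤ U ^ (-t) :=
    Real.rpow_le_rpow_of_nonpos hU hUV (by linarith)
  calc U ^ (-a) * V ^ (-a) * W ^ (-a)
      ≤ U ^ (-a) * V ^ (-a) * V ^ (-a) := by
        apply mul_le_mul_of_nonneg_left h1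
        positivity
    _ = U ^ (-a) * (V ^ (-a) * V ^ (-a)) := by ring
    _ = U ^ (-a) * (V ^ (-t) * V ^ (-(2*a - t))) := by
        rw [← Real.rpow_add hV, ← Real.rpow_add hV]
        congr 2
        ring
    _ ≤ U ^ (-a) * (U ^ (-t) * V ^ (-(2*a - t))) := by
        apply mul_le_mul_of_nonneg_left _ (by positivity)
        apply mul_le_mul_of_nonneg_right h2 (by positivity)
    _ = U ^ (-a) * U ^ (-t) * V ^ (-(2*a - t)) := by ring
    _ = U ^ (-(a+t)) * V ^ (-(2*a - t)) := by
        rw [← Real.rpow_add hU, show -a + -t = -(a+t) by ring]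

lemma latPow_mul_eq {u v : Fin d → ℤ} (hu : u ≠ 0) (hv : v ≠ 0) (e f : ℝ) :
    latPow u e * latPow v f = ENNReal.ofReal (‖u‖ ^ e * ‖v‖ ^ f) := by
  rw [latPow, latPow, if_neg hu, if_neg hv, ENNReal.ofReal_mul (by positivity)]

/-- Pointwise bound by the six decoupled terms. -/
lemma triple_le (hd : 6 < d) (x y : Fin d → ℤ) :
    latPow x ((2:ℝ) - d) * latPow (x - y) ((2:ℝ) - d) * latPow y ((2:ℝ) - d) ≤
      latPow x (-((d:ℝ) + 1/2)) * latPow (x - y) (-(2*(d:ℝ) - 13/2))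
      + latPow (x - y) (-((d:ℝ) + 1/2)) * latPow x (-(2*(d:ℝ) - 13/2))
      + latPow x (-((d:ℝ) + 1/2)) * latPow y (-(2*(d:ℝ) - 13/2))
      + latPow y (-((d:ℝ) + 1/2)) * latPow x (-(2*(d:ℝ) - 13/2))
      + latPow (x - y) (-((d:ℝ) + 1/2)) * latPow y (-(2*(d:ℝ) - 13/2))
      + latPow y (-((d:ℝ) + 1/2)) * latPow (x - y) (-(2*(d:ℝ) - 13/2)) := by
  by_cases hx : x = 0
  · simp [latPow, hx]
  by_cases hxy : x - y = 0
  · simp [latPow, hxy]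
  by_cases hy : y = 0
  · simp [latPow, hy]
  have hd7 : (7:ℝ) ≤ (d:ℝ) := by exact_mod_cast hd
  set a : ℝ := (d:ℝ) - 2 with ha
  have hea : (2:ℝ) - d = -a := by rw [ha]; ring
  have hep : -((d:ℝ) + 1/2) = -(a + 5/2) := by rw [ha]; ring
  have heq : -(2*(d:ℝ) - 13/2) = -(2*a - 5/2) := by rw [ha]; ring
  have ht : (0:ℝ) ≤ 5/2 := by norm_num
  have hta : (5:ℝ)/2 ≤ a := by rw [ha]; linarith
  set A := ‖x‖ with hA
  set B := ‖x - y‖ with hB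
  set C := ‖y‖ with hC
  have hA0 : 0 < A := norm_pos_iff.mpr hx
  have hB0 : 0 < B := norm_pos_iff.mpr hxy
  have hC0 : 0 < C := norm_pos_iff.mpr hy
  have hL : latPow x ((2:ℝ) - d) * latPow (x - y) ((2:ℝ) - d) * latPow y ((2:ℝ) - d)
      = ENNReal.ofReal (A ^ (-a) * B ^ (-a) * C ^ (-a)) := by
    rw [latPow, latPow, latPow, if_neg hx, if_neg hxy, if_neg hy, hea,
      ENNReal.ofReal_mul (by positivity), ENNReal.ofReal_mul (by positivity)]
  rw [hL, hep, heq]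
  -- six cases according to the ordering of A, B, C
  rcases le_total A B with h1 | h1
  · rcases le_total B C with h2 | h2
    · -- A ≤ B ≤ C : use (A, B) term
      refine le_trans ?_ (le_add_right (le_add_right (le_add_right (le_add_right
        (le_add_right le_rfl)))))
      rw [latPow_mul_eq hx hxy]
      exact ENNReal.ofReal_le_ofReal (key_real hA0 h1 h2 ht hta)
    · rcases le_total A C with h3 | h3
      · -- A ≤ C ≤ B : use (A, C) term
        refine le_trans ?_ (le_add_right (le_add_right (le_add_right (le_add_left le_rfl))))
        rw [latPow_mul_eq hx hy]
        refine ENNReal.ofReal_le_ofReal ?_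
        calc A ^ (-a) * B ^ (-a) * C ^ (-a) = A ^ (-a) * C ^ (-a) * B ^ (-a) := by ring
          _ ≤ _ := key_real hA0 h3 h2 ht hta
      · -- C ≤ A ≤ B : use (C, A) term
        refine le_trans ?_ (le_add_right (le_add_right (le_add_left le_rfl)))
        rw [latPow_mul_eq hy hx]
        refine ENNReal.ofReal_le_ofReal ?_
        calc A ^ (-a) * B ^ (-a) * C ^ (-a) = C ^ (-a) * A ^ (-a) * B ^ (-a) := by ring
          _ ≤ _ := key_real hC0 h3 h1 ht hta
  · rcases le_total A C with h2 | h2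
    · -- B ≤ A ≤ C : use (B, A) term
      refine le_trans ?_ (le_add_right (le_add_right (le_add_right (le_add_right
        (le_add_left le_rfl)))))
      rw [latPow_mul_eq hxy hx]
      refine ENNReal.ofReal_le_ofReal ?_
      calc A ^ (-a) * B ^ (-a) * C ^ (-a) = B ^ (-a) * A ^ (-a) * C ^ (-a) := by ring
        _ ≤ _ := key_real hB0 h1 h2 ht hta
    · rcases le_total B C with h3 | h3
      · -- B ≤ C ≤ A : use (B, C) term
        refine le_trans ?_ (le_add_right (le_add_left le_rfl))
        rw [latPow_mul_eq hxy hy]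
        refine ENNReal.ofReal_le_ofReal ?_
        calc A ^ (-a) * B ^ (-a) * C ^ (-a) = B ^ (-a) * C ^ (-a) * A ^ (-a) := by ring
          _ ≤ _ := key_real hB0 h3 h2 ht hta
      · -- C ≤ B ≤ A : use (C, B) term
        refine le_trans ?_ (le_add_left le_rfl)
        rw [latPow_mul_eq hy hxy]
        refine ENNReal.ofReal_le_ofReal ?_
        calc A ^ (-a) * B ^ (-a) * C ^ (-a) = C ^ (-a) * B ^ (-a) * A ^ (-a) := by ring
          _ ≤ _ := key_real hC0 h3 h1 ht hta

lemma sep_sub (p q : ℝ) :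
    ∑' x : Fin d → ℤ, ∑' y : Fin d → ℤ, latPow x p * latPow (x - y) q
      = (∑' z : Fin d → ℤ, latPow z p) * (∑' z : Fin d → ℤ, latPow z q) := by
  calc ∑' x : Fin d → ℤ, ∑' y : Fin d → ℤ, latPow x p * latPow (x - y) q
      = ∑' x : Fin d → ℤ, latPow x p * ∑' y : Fin d → ℤ, latPow (x - y) q :=
        tsum_congr fun x => ENNReal.tsum_mul_left
    _ = ∑' x : Fin d → ℤ, latPow x p * ∑' z : Fin d → ℤ, latPow z q :=
        tsum_congr fun x =>
          congrArg (latPow x p * ·) ((Equiv.subLeft x).tsum_eq fun z => latPow z q)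
    _ = _ := ENNReal.tsum_mul_right

lemma sep_indep (p q : ℝ) :
    ∑' x : Fin d → ℤ, ∑' y : Fin d → ℤ, latPow x p * latPow y q
      = (∑' z : Fin d → ℤ, latPow z p) * (∑' z : Fin d → ℤ, latPow z q) := by
  calc ∑' x : Fin d → ℤ, ∑' y : Fin d → ℤ, latPow x p * latPow y q
      = ∑' x : Fin d → ℤ, latPow x p * ∑' y : Fin d → ℤ, latPow y q :=
        tsum_congr fun x => ENNReal.tsum_mul_left
    _ = _ := ENNReal.tsum_mul_right

lemma sep_sub' (p q : ℝ) :
    ∑' x : Fin d → ℤ, ∑' y : Fin d → ℤ, latPow (x - y) p * latPow y q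
      = (∑' z : Fin d → ℤ, latPow z p) * (∑' z : Fin d → ℤ, latPow z q) := by
  rw [ENNReal.tsum_comm]
  calc ∑' y : Fin d → ℤ, ∑' x : Fin d → ℤ, latPow (x - y) p * latPow y q
      = ∑' y : Fin d → ℤ, (∑' x : Fin d → ℤ, latPow (x - y) p) * latPow y q :=
        tsum_congr fun y => ENNReal.tsum_mul_right
    _ = ∑' y : Fin d → ℤ, (∑' z : Fin d → ℤ, latPow z p) * latPow y q :=
        tsum_congr fun y =>
          congrArg (· * latPow y q) ((Equiv.subRight y).tsum_eq fun z => latPow z p)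
    _ = _ := ENNReal.tsum_mul_left

end Stmt9

theorem statement9 (d : ℕ) (hd : 6 < d) :
    ∑' x : Fin d → ℤ, ∑' y : Fin d → ℤ,
      latPow x ((2 : ℝ) - d) * latPow (x - y) ((2 : ℝ) - d) * latPow y ((2 : ℝ) - d) < ⊤ := by
  have hd0 : 0 < d := by omega
  have hd7 : (7:ℝ) ≤ (d:ℝ) := by exact_mod_cast hd
  set p : ℝ := (d:ℝ) + 1/2 with hp'
  set q : ℝ := 2*(d:ℝ) - 13/2 with hq'
  have hp : (d:ℝ) < p := by rw [hp']; linarith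
  have hq : (d:ℝ) < q := by rw [hq']; linarith
  have Sp := Stmt9.sum_lt_top hd0 hp
  have Sq := Stmt9.sum_lt_top hd0 hq
  have hfin : (∑' z : Fin d → ℤ, latPow z (-p)) * (∑' z : Fin d → ℤ, latPow z (-q)) < ⊤ :=
    ENNReal.mul_lt_top Sp Sq
  calc ∑' x : Fin d → ℤ, ∑' y : Fin d → ℤ,
        latPow x ((2 : ℝ) - d) * latPow (x - y) ((2 : ℝ) - d) * latPow y ((2 : ℝ) - d)
      ≤ ∑' x : Fin d → ℤ, ∑' y : Fin d → ℤ,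
        (latPow x (-p) * latPow (x - y) (-q)
        + latPow (x - y) (-p) * latPow x (-q)
        + latPow x (-p) * latPow y (-q)
        + latPow y (-p) * latPow x (-q)
        + latPow (x - y) (-p) * latPow y (-q)
        + latPow y (-p) * latPow (x - y) (-q)) := by
        refine ENNReal.tsum_le_tsum fun x => ENNReal.tsum_le_tsum fun y => ?_
        have := Stmt9.triple_le hd x y
        rw [hp', hq']
        convert this using 2
    _ = (∑' x : Fin d → ℤ, ∑' y : Fin d → ℤ, latPow x (-p) * latPow (x - y) (-q))
      + (∑' x : Fin d → ℤ, ∑' y : Fin d → ℤ, latPow (x - y) (-p) * latPow x (-q))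
      + (∑' x : Fin d → ℤ, ∑' y : Fin d → ℤ, latPow x (-p) * latPow y (-q))
      + (∑' x : Fin d → ℤ, ∑' y : Fin d → ℤ, latPow y (-p) * latPow x (-q))
      + (∑' x : Fin d → ℤ, ∑' y : Fin d → ℤ, latPow (x - y) (-p) * latPow y (-q))
      + (∑' x : Fin d → ℤ, ∑' y : Fin d → ℤ, latPow y (-p) * latPow (x - y) (-q)) := by
        simp only [ENNReal.tsum_add]
    _ < ⊤ := by
        have e1 := Stmt9.sep_sub (d := d) (-p) (-q)
        have e2 : ∑' x : Fin d → ℤ, ∑' y : Fin d → ℤ, latPow (x - y) (-p) * latPow x (-q)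
            = (∑' z : Fin d → ℤ, latPow z (-q)) * (∑' z : Fin d → ℤ, latPow z (-p)) := by
          calc ∑' x : Fin d → ℤ, ∑' y : Fin d → ℤ, latPow (x - y) (-p) * latPow x (-q)
              = ∑' x : Fin d → ℤ, ∑' y : Fin d → ℤ, latPow x (-q) * latPow (x - y) (-p) :=
                tsum_congr fun x => tsum_congr fun y => mul_comm _ _
            _ = _ := Stmt9.sep_sub (d := d) (-q) (-p)
        have e3 := Stmt9.sep_indep (d := d) (-p) (-q)
        have e4 : ∑' x : Fin d → ℤ, ∑' y : Fin d → ℤ, latPow y (-p) * latPow x (-q)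
            = (∑' z : Fin d → ℤ, latPow z (-q)) * (∑' z : Fin d → ℤ, latPow z (-p)) := by
          calc ∑' x : Fin d → ℤ, ∑' y : Fin d → ℤ, latPow y (-p) * latPow x (-q)
              = ∑' x : Fin d → ℤ, ∑' y : Fin d → ℤ, latPow x (-q) * latPow y (-p) :=
                tsum_congr fun x => tsum_congr fun y => mul_comm _ _
            _ = _ := Stmt9.sep_indep (d := d) (-q) (-p)
        have e5 := Stmt9.sep_sub' (d := d) (-p) (-q)
        have e6 : ∑' x : Fin d → ℤ, ∑' y : Fin d → ℤ, latPow y (-p) * latPow (x - y) (-q)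
            = (∑' z : Fin d → ℤ, latPow z (-q)) * (∑' z : Fin d → ℤ, latPow z (-p)) := by
          calc ∑' x : Fin d → ℤ, ∑' y : Fin d → ℤ, latPow y (-p) * latPow (x - y) (-q)
              = ∑' x : Fin d → ℤ, ∑' y : Fin d → ℤ, latPow (x - y) (-q) * latPow y (-p) :=
                tsum_congr fun x => tsum_congr fun y => mul_comm _ _
            _ = _ := Stmt9.sep_sub' (d := d) (-q) (-p)
        rw [e1, e2, e3, e4, e5, e6]
        have hfin' : (∑' z : Fin d → ℤ, latPow z (-q)) * (∑' z : Fin d → ℤ, latPow z (-p)) < ⊤ :=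
          ENNReal.mul_lt_top Sq Sp
        exact ENNReal.add_lt_top.mpr ⟨ENNReal.add_lt_top.mpr ⟨ENNReal.add_lt_top.mpr
          ⟨ENNReal.add_lt_top.mpr ⟨ENNReal.add_lt_top.mpr ⟨hfin, hfin'⟩, hfin⟩, hfin'⟩, hfin⟩,
          hfin'⟩
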